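/- Suppose ct(s,φ) partitions T into nonempty T₁ = {t ∈ T : λ(s,t) ≥ φ} and T₂ = T\T₁, and let S be the T₁-side of the earliest T₁-T₂ minimum cut. Then S does not cross any supreme set: for every supreme set X = μ(R), one of S ⊆ X, X ⊆ S, or S ∩ X = ∅ holds (up to the trivial intersections forced by terminals). -/
import Mathlib


variable {V : Type*}

def IsSteinerCut (T X : Set V) : Prop := (X ∩ T).Nonempty ∧ ¬ T ⊆ X

def SteinerExtreme (d : Set V → ℝ) (T X : Set V) : Prop :=
  IsSteinerCut T X ∧ ∀ Y, IsSteinerCut T Y → Y ⊂ X → d X < d Y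

def Crosses (X Y : Set V) : Prop :=
  (X ∩ Y).Nonempty ∧ (X \ Y).Nonempty ∧ (Y \ X).Nonempty

def IsSupreme (d : Set V → ℝ) (T X : Set V) : Prop :=
  SteinerExtreme d T X ∧ ∀ Y, SteinerExtreme d T Y → Y ∩ T = X ∩ T → Y ⊆ X

def IsStCut (s t : V) (S : Set V) : Prop := t ∈ S ∧ s ∉ S

def cutThreshold (lam : V → V → ℝ) (s : V) (φ : ℝ) : Set V :=
  {t | φ ≤ lam s t} ∪ {s}

def IsABCut (A B S : Set V) : Prop := A ⊆ S ∧ S ∩ B = ∅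

def IsABMinCut (d : Set V → ℝ) (A B S : Set V) : Prop :=
  IsABCut A B S ∧ ∀ S', IsABCut A B S' → d S ≤ d S'

def IsEarliestABMinCut (d : Set V → ℝ) (A B S : Set V) : Prop :=
  IsABMinCut d A B S ∧ ∀ S', IsABMinCut d A B S' → S ⊆ S'

lemma exists_extreme_between [Fintype V] (d : Set V → ℝ) (T X Y : Set V)
    (hsub : ∀ A B : Set V, d (A ∩ B) + d (A ∪ B) ≤ d A + d B)
    (hX : SteinerExtreme d T X) (hXY : X ⊆ Y) (hYT : Y ∩ T = X ∩ T)
    (hTY : ¬ T ⊆ Y) :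
    ∃ Z, SteinerExtreme d T Z ∧ X ⊆ Z ∧ Z ⊆ Y ∧ d Z ≤ d Y := by
  classical
  set F : Set (Set V) := {W | X ⊆ W ∧ W ⊆ Y} with hF
  have hFfin : F.Finite := Set.toFinite F
  have hFne : F.Nonempty := ⟨X, subset_rfl, hXY⟩
  obtain ⟨M, hM, hMmin⟩ := Set.exists_min_image F d hFfin hFne
  set F' : Set (Set V) := {W | W ∈ F ∧ d W = d M} with hF'
  have hF'fin : F'.Finite := hFfin.subset (fun W hW => hW.1)
  have hF'ne : F'.Nonempty := ⟨M, hM, rfl⟩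
  obtain ⟨Z, hZ, hZmin⟩ := Set.exists_min_image F' (fun W => W.ncard) hF'fin hF'ne
  obtain ⟨⟨hXZ, hZY⟩, hZd⟩ := hZ
  have hYF : Y ∈ F := ⟨hXY, subset_rfl⟩
  have hdZY : d Z ≤ d Y := hZd ▸ hMmin Y hYF
  refine ⟨Z, ⟨⟨?_, ?_⟩, ?_⟩, hXZ, hZY, hdZY⟩
  · exact hX.1.1.mono (Set.inter_subset_inter_left T hXZ)
  · exact fun h => hTY (h.trans hZY)
  · intro W₀ hW₀s hW₀Z
    by_contra hle
    push_neg at hle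
    by_cases hXW : X ⊆ W₀
    · have hW₀F : W₀ ∈ F := ⟨hXW, hW₀Z.subset.trans hZY⟩
      have h1 : d M ≤ d W₀ := hMmin W₀ hW₀F
      have h2 : d W₀ = d M := le_antisymm (hle.trans_eq hZd) h1
      have h3 : Z.ncard ≤ W₀.ncard := hZmin W₀ ⟨hW₀F, h2⟩
      have h4 : W₀.ncard < Z.ncard := Set.ncard_lt_ncard hW₀Z (Set.toFinite Z)
      omega
    · have hWTX : W₀ ∩ T ⊆ X := by
        have : W₀ ∩ T ⊆ Y ∩ T :=
          Set.inter_subset_inter_left T (hW₀Z.subset.trans hZY)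
        rw [hYT] at this
        exact this.trans Set.inter_subset_left
      have hWXT : (W₀ ∩ X) ∩ T = W₀ ∩ T := by
        ext v
        constructor
        · rintro ⟨⟨h1, _⟩, h2⟩; exact ⟨h1, h2⟩
        · rintro ⟨h1, h2⟩; exact ⟨⟨h1, hWTX ⟨h1, h2⟩⟩, h2⟩
      have hsc : IsSteinerCut T (W₀ ∩ X) := by
        refine ⟨?_, ?_⟩
        · rw [hWXT]; exact hW₀s.1
        · exact fun h => hX.1.2 (h.trans (Set.inter_subset_right))
      have hssub : W₀ ∩ X ⊂ X := by
        refine Set.ssubset_iff_subset_ne.2 ⟨Set.inter_subset_right, fun h => hXW ?_⟩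
        rw [← h]; exact Set.inter_subset_left
      have h1 : d X < d (W₀ ∩ X) := hX.2 _ hsc hssub
      have hUF : W₀ ∪ X ∈ F :=
        ⟨Set.subset_union_right, Set.union_subset (hW₀Z.subset.trans hZY) hXY⟩
      have h2 : d Z ≤ d (W₀ ∪ X) := hZd ▸ hMmin _ hUF
      have h3 := hsub W₀ X
      linarith


/-- Suppose the cut threshold `ct(s,φ)` partitions the terminals into nonempty
sides `T₁` and `T₂ = T \ T₁`, and let `S` be the `T₁`-side of the earliest
`T₁`-`T₂` min cut. Then `S` does not cross any supreme set `X`. -/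
theorem earliest_ct_minCut_uncross_supreme [Fintype V] (d : Set V → ℝ) (T : Set V)
    (lam : V → V → ℝ) (s : V) (φ : ℝ) (S X : Set V)
    (hsub : ∀ A B : Set V, d (A ∩ B) + d (A ∪ B) ≤ d A + d B)
    (hpos : ∀ A B : Set V, d (A \ B) + d (B \ A) ≤ d A + d B)
    (h4 : ∀ A B : Set V, Crosses A B → max (d A) (d B) < d (A ∩ B) →
      d (A ∪ B) < min (d A) (d B))
    (hsymm : ∀ A : Set V, d Aᶜ = d A)
    (hlam_lb : ∀ t S', IsStCut s t S' → lam s t ≤ d S')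
    (hlam_att : ∀ t, t ≠ s → ∃ S', IsStCut s t S' ∧ d S' = lam s t)
    (hlam_uniq : ∀ t, t ≠ s → ∃! S', IsStCut s t S' ∧ d S' = lam s t)
    (hT₁ : (cutThreshold lam s φ ∩ T).Nonempty)
    (hT₂ : (T \ cutThreshold lam s φ).Nonempty)
    (hS : IsEarliestABMinCut d (cutThreshold lam s φ ∩ T) (T \ cutThreshold lam s φ) S)
    (hX : IsSupreme d T X) :
    S ⊆ X ∨ X ⊆ S ∨ S ∩ X = ∅ := by
  classical
  set ct := cutThreshold lam s φ with hct
  obtain ⟨⟨⟨hT1S, hST2⟩, hSmin⟩, hSearliest⟩ := hS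
  obtain ⟨⟨⟨hXTne, hTX⟩, hXext⟩, hXsup⟩ := hX
  have hXe : SteinerExtreme d T X := ⟨⟨hXTne, hTX⟩, hXext⟩
  have hsmem : s ∈ ct := Or.inr rfl
  have hctlam : ∀ t, t ∈ ct → t ≠ s → φ ≤ lam s t := by
    intro t ht hts
    rcases ht with h | h
    · exact h
    · exact absurd h hts
  have hT2lam : ∀ t, t ∈ T \ ct → lam s t < φ := by
    intro t ht
    by_contra h
    push_neg at h
    exact ht.2 (Or.inl h)
  have hT2ns : ∀ t, t ∈ T \ ct → t ≠ s := fun t ht h => ht.2 (h ▸ hsmem)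
  have hT2nS : ∀ t, t ∈ T \ ct → t ∉ S := by
    intro t ht htS
    have h0 : t ∈ S ∩ (T \ ct) := ⟨htS, ht⟩
    rw [hST2] at h0
    exact h0
  have hSTct : S ∩ T ⊆ ct := by
    intro v hv
    by_contra h
    exact hT2nS v ⟨hv.2, h⟩ hv.1
  obtain ⟨t₃, ht₃⟩ := hT₂
  by_contra hcon
  push_neg at hcon
  obtain ⟨hSX, hXS, hSXne⟩ := hcon
  obtain ⟨x₁, hx₁S, hx₁X⟩ := Set.not_subset.1 hSX
  obtain ⟨x₂, hx₂X, hx₂S⟩ := Set.not_subset.1 hXS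
  by_cases hc2 : (X ∩ (T \ ct)).Nonempty
  · -- X contains a T₂-terminal t₂
    obtain ⟨t₂, ht₂X, ht₂T2⟩ := hc2
    have ht₂T : t₂ ∈ T := ht₂T2.1
    have ht₂ns : t₂ ≠ s := hT2ns t₂ ht₂T2
    have ht₂lam : lam s t₂ < φ := hT2lam t₂ ht₂T2
    have ht₂nS : t₂ ∉ S := hT2nS t₂ ht₂T2
    obtain ⟨A, ⟨ht₂A, hsA⟩, hdA⟩ := hlam_att t₂ ht₂ns
    have hdAφ : d A < φ := by rw [hdA]; exact ht₂lam
    by_cases hc1 : (X ∩ (ct ∩ T)).Nonempty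
    · -- X also contains a T₁-terminal t₁ : mixed projection
      obtain ⟨t₁, ht₁X, ht₁ct, ht₁T⟩ := hc1
      by_cases hsX : s ∈ X
      · by_cases hT1X : ct ∩ T ⊆ X
        · -- Case 3b-ii : T₁ ⊆ X
          have hSXcut : IsABCut (ct ∩ T) (T \ ct) (S ∩ X) := by
            refine ⟨Set.subset_inter hT1S hT1X, ?_⟩
            have h0 : S ∩ X ∩ (T \ ct) ⊆ S ∩ (T \ ct) :=
              Set.inter_subset_inter_left _ Set.inter_subset_left
            rw [hST2] at h0
            exact Set.subset_eq_empty h0 rfl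
          have hdSSX : d S ≤ d (S ∩ X) := hSmin _ hSXcut
          have hSXsteiner : IsSteinerCut T (S ∩ X) := by
            obtain ⟨u, hu⟩ := hT₁
            refine ⟨⟨u, ⟨hT1S hu, hT1X hu⟩, hu.2⟩, fun h => ht₂nS (h ht₂T).1⟩
          have hSXssub : S ∩ X ⊂ X := by
            refine Set.ssubset_iff_subset_ne.2 ⟨Set.inter_subset_right, fun h => ?_⟩
            rw [← h] at ht₂X
            exact ht₂nS ht₂X.1
          have hdXSX : d X < d (S ∩ X) := hXext _ hSXsteiner hSXssub
          rcases eq_or_lt_of_le hdSSX with heq | hlt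
          · have hsubst : S ⊆ S ∩ X :=
              hSearliest _ ⟨hSXcut, fun S' h => heq ▸ hSmin S' h⟩
            exact hx₁X (hsubst hx₁S).2
          · have hcross : Crosses S X := ⟨hSXne, ⟨x₁, hx₁S, hx₁X⟩, ⟨x₂, hx₂X, hx₂S⟩⟩
            have hU := h4 S X hcross (max_lt hlt hdXSX)
            have hYT : (S ∪ X) ∩ T = X ∩ T := by
              ext v
              constructor
              · rintro ⟨h1 | h1, h2⟩
                · exact ⟨hT1X ⟨hSTct ⟨h1, h2⟩, h2⟩, h2⟩
                · exact ⟨h1, h2⟩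
              · rintro ⟨h1, h2⟩; exact ⟨Or.inr h1, h2⟩
            have hTY : ¬ T ⊆ S ∪ X := by
              intro h
              refine hTX (fun v hv => ?_)
              have h1 : v ∈ (S ∪ X) ∩ T := ⟨h hv, hv⟩
              rw [hYT] at h1
              exact h1.1
            obtain ⟨Z, hZext, hXZ, hZY, hZd⟩ :=
              exists_extreme_between d T X (S ∪ X) hsub hXe Set.subset_union_right hYT hTY
            have hZX : Z ⊆ X := by
              refine hXsup Z hZext ?_
              apply Set.Subset.antisymm
              · exact hYT ▸ Set.inter_subset_inter_left T hZY
              · exact Set.inter_subset_inter_left T hXZ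
            have hZeq : Z = X := Set.Subset.antisymm hZX hXZ
            rw [hZeq] at hZd
            have hUX : d (S ∪ X) < d X := lt_of_lt_of_le hU (min_le_right _ _)
            linarith
        · -- Case 3b-i : some T₁-terminal t₀ outside X
          obtain ⟨t₀, ht₀ctT, ht₀X⟩ := Set.not_subset.1 hT1X
          have ht₀ns : t₀ ≠ s := fun h => ht₀X (h ▸ hsX)
          have hφt₀ : φ ≤ lam s t₀ := hctlam t₀ ht₀ctT.1 ht₀ns
          have hφX : φ ≤ d X := by
            have h1 : lam s t₀ ≤ d Xᶜ := hlam_lb t₀ Xᶜ ⟨ht₀X, fun h => h hsX⟩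
            rw [hsymm] at h1
            linarith
          have ht₀A : t₀ ∉ A := by
            intro h
            have h1 := hlam_lb t₀ A ⟨h, hsA⟩
            linarith
          have hAXsteiner : IsSteinerCut T (A ∩ X) :=
            ⟨⟨t₂, ⟨ht₂A, ht₂X⟩, ht₂T⟩, fun h => ht₀A (h ht₀ctT.2).1⟩
          have hAXssub : A ∩ X ⊂ X := by
            refine Set.ssubset_iff_subset_ne.2 ⟨Set.inter_subset_right, fun h => ?_⟩
            rw [← h] at hsX
            exact hsA hsX.1
          have hdXAX : d X < d (A ∩ X) := hXext _ hAXsteiner hAXssub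
          by_cases hAX : A ⊆ X
          · have hAss : A ⊂ X :=
              Set.ssubset_iff_subset_ne.2 ⟨hAX, fun h => hsA (h ▸ hsX)⟩
            have h1 : d X < d A :=
              hXext A ⟨⟨t₂, ht₂A, ht₂T⟩, fun h => ht₀A (h ht₀ctT.2)⟩ hAss
            linarith
          · have hAXst : lam s t₂ ≤ d (A ∩ X) :=
              hlam_lb t₂ _ ⟨⟨ht₂A, ht₂X⟩, fun h => hsA h.1⟩
            rcases eq_or_lt_of_le hAXst with heq | hlt2
            · obtain ⟨A₀, hA₀, hA₀uniq⟩ := hlam_uniq t₂ ht₂ns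
              have e1 : A ∩ X = A₀ :=
                hA₀uniq _ ⟨⟨⟨ht₂A, ht₂X⟩, fun h => hsA h.1⟩, heq.symm⟩
              have e2 : A = A₀ := hA₀uniq _ ⟨⟨ht₂A, hsA⟩, hdA⟩
              have e3 : A ∩ X = A := e1.trans e2.symm
              refine hAX (fun v hv => ?_)
              rw [← e3] at hv
              exact hv.2
            · obtain ⟨a, haA, haX⟩ := Set.not_subset.1 hAX
              have hcr : Crosses A X := ⟨⟨t₂, ht₂A, ht₂X⟩, ⟨a, haA, haX⟩, ⟨s, hsX, hsA⟩⟩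
              have hmax : max (d A) (d X) < d (A ∩ X) := max_lt (by linarith) hdXAX
              have hU := h4 A X hcr hmax
              have hUA : d (A ∪ X) < d A := lt_of_lt_of_le hU (min_le_left _ _)
              have hlb : lam s t₀ ≤ d (A ∪ X) := by
                have h1 : lam s t₀ ≤ d (A ∪ X)ᶜ := by
                  refine hlam_lb t₀ (A ∪ X)ᶜ ⟨?_, ?_⟩
                  · intro h
                    exact h.elim ht₀A ht₀X
                  · intro h
                    exact h (Or.inr hsX)
                rw [hsymm] at h1
                exact h1
              linarith
      · -- Case 3a : s ∉ X
        have ht₁ns : t₁ ≠ s := fun h => hsX (h ▸ ht₁X)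
        have hφt₁ : φ ≤ lam s t₁ := hctlam t₁ ht₁ct ht₁ns
        have ht₁A : t₁ ∉ A := by
          intro h
          have h1 := hlam_lb t₁ A ⟨h, hsA⟩
          linarith
        have hAXsteiner : IsSteinerCut T (A ∩ X) :=
          ⟨⟨t₂, ⟨ht₂A, ht₂X⟩, ht₂T⟩, fun h => hTX (h.trans Set.inter_subset_right)⟩
        have hAXssub : A ∩ X ⊂ X := by
          refine Set.ssubset_iff_subset_ne.2 ⟨Set.inter_subset_right, fun h => ?_⟩
          rw [← h] at ht₁X
          exact ht₁A ht₁X.1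
        have h1 : d X < d (A ∩ X) := hXext _ hAXsteiner hAXssub
        have h2 : lam s t₂ ≤ d (A ∪ X) :=
          hlam_lb t₂ _ ⟨Or.inl ht₂A, fun h => h.elim hsA hsX⟩
        have h3 := hsub A X
        linarith
    · -- Case 2a : projection of X inside T₂ : posimodularity
      have hXTS : ∀ v, v ∈ X ∩ T → v ∉ S := by
        intro v hv hvS
        exact hc1 ⟨v, hv.1, hSTct ⟨hvS, hv.2⟩, hv.2⟩
      have hXSsteiner : IsSteinerCut T (X \ S) := by
        obtain ⟨u, hu⟩ := hXTne
        exact ⟨⟨u, ⟨hu.1, hXTS u hu⟩, hu.2⟩, fun h => hTX (h.trans Set.diff_subset)⟩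
      have hXSssub : X \ S ⊂ X := by
        refine Set.ssubset_iff_subset_ne.2 ⟨Set.diff_subset, fun h => ?_⟩
        obtain ⟨x, hxS, hxX⟩ := hSXne
        rw [← h] at hxX
        exact hxX.2 hxS
      have h1 : d X < d (X \ S) := hXext _ hXSsteiner hXSssub
      have h2 : d S ≤ d (S \ X) := by
        refine hSmin _ ⟨?_, ?_⟩
        · intro v hv
          refine ⟨hT1S hv, fun hvX => ?_⟩
          exact hc1 ⟨v, hvX, hv⟩
        · have h0 : (S \ X) ∩ (T \ ct) ⊆ S ∩ (T \ ct) :=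
            Set.inter_subset_inter_left _ Set.diff_subset
          rw [hST2] at h0
          exact Set.subset_eq_empty h0 rfl
      have h3 := hpos S X
      linarith
  · -- Case 1 : projection of X inside T₁ : submodularity
    have hempty : X ∩ (T \ ct) = ∅ := Set.not_nonempty_iff_eq_empty.1 hc2
    have hRS : X ∩ T ⊆ S := by
      intro v hv
      have hvct : v ∈ ct := by
        by_contra h
        have h0 : v ∈ X ∩ (T \ ct) := ⟨hv.1, hv.2, h⟩
        rw [hempty] at h0
        exact h0
      exact hT1S ⟨hvct, hv.2⟩
    have hSXsteiner : IsSteinerCut T (S ∩ X) := by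
      obtain ⟨u, huX, huT⟩ := hXTne
      exact ⟨⟨u, ⟨hRS ⟨huX, huT⟩, huX⟩, huT⟩, fun h => hT2nS t₃ ht₃ (h ht₃.1).1⟩
    have hSXssub : S ∩ X ⊂ X := by
      refine Set.ssubset_iff_subset_ne.2 ⟨Set.inter_subset_right, fun h => ?_⟩
      rw [← h] at hx₂X
      exact hx₂S hx₂X.1
    have h1 : d X < d (S ∩ X) := hXext _ hSXsteiner hSXssub
    have h2 : d S ≤ d (S ∪ X) := by
      refine hSmin _ ⟨hT1S.trans Set.subset_union_left, ?_⟩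
      ext v
      simp only [Set.mem_inter_iff, Set.mem_union, Set.mem_empty_iff_false, iff_false, not_and]
      rintro (hv | hv) hvT2
      · exact hT2nS v hvT2 hv
      · have h0 : v ∈ X ∩ (T \ ct) := ⟨hv, hvT2⟩
        rw [hempty] at h0
        exact h0
    have h3 := hsub S X
    linarith
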